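/- arXiv:2205.07089 — 2 statements merged into one kernel-verified Lean document; each statement's English description precedes it below -/
import Mathlib

section
/- Let M ⊆ N with inclusion α, where both M and N are Hilbert C*-modules with a Hilbert dual, and define P : N' → M' by P(g)(m) = g(α(m)) and I = P* : M' → N'. Then I(m̂) = α(m)^ for all m ∈ M, and if M is thick in N, then P ∘ I = id_{M'} and I is an isometric inclusion. -/
open scoped RightActions

/-- The Hilbert C⋆-module class as it stood in the older Mathlib (right action of `A`
through `Aᵐᵒᵖ`, inner product `A`-linear on the right); Mathlib's `CStarModule` now uses a
left action with another axiom. -/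
class RightCStarModule (A : outParam <| Type*) (E : Type*) [NonUnitalSemiring A] [StarRing A]
    [Module ℂ A] [AddCommGroup E] [Module ℂ E] [PartialOrder A] [SMul Aᵐᵒᵖ E] [Norm A] [Norm E]
    extends Inner A E where
  inner_add_right {x} {y} {z} : inner x (y + z) = inner x y + inner x z
  inner_self_nonneg {x} : 0 ≤ inner x x
  inner_self {x} : inner x x = 0 ↔ x = 0
  inner_op_smul_right {a : A} {x y : E} : inner x (y <• a) = inner x y * a
  inner_smul_right_complex {z : ℂ} {x} {y} : inner x (z • y) = z • inner x y
  star_inner x y : star (inner x y) = inner y x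
  norm_eq_sqrt_norm_inner_self x : ‖x‖ = √‖inner x x‖

section Defs

variable {A : Type*} [CStarAlgebra A] [PartialOrder A] [StarOrderedRing A]
variable {E : Type*} [NormedAddCommGroup E] [NormedSpace ℂ E] [SMul Aᵐᵒᵖ E] [RightCStarModule A E]

/-- Membership in the dual module `M'`: a bounded `A`-antilinear functional on `E`
(the functional `f` plays the role of `m ↦ ⟨m, f⟩`). -/
def IsDualFunctional (f : E → A) : Prop :=
  (∀ x y, f (x + y) = f x + f y) ∧
  (∀ (c : ℂ) (x : E), f (c • x) = (starRingEnd ℂ) c • f x) ∧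
  (∀ (x : E) (a : A), f (x <• a) = star a * f x) ∧
  ∃ C : ℝ, ∀ x, ‖f x‖ ≤ C * ‖x‖

/-- The canonical image `m̂` of `m ∈ M` in the dual module: `m̂ x = ⟨x, m⟩`. -/
def mhat (m : E) : E → A := fun x => inner A x m

/-- The right action of `A` on dual functionals: `f·a`. -/
def dualAct (f : E → A) (a : A) : E → A := fun x => f x * a

/-- The right ideal `J_f = {a ∈ A : f·a ∈ M}`. -/
def Jf (f : E → A) : Set A := {a : A | ∃ m : E, dualAct f a = mhat m}

/-- The right ideal `J_f` is essential in `A`. -/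
def JfEssential (f : E → A) : Prop := ∀ a : A, (∀ j ∈ Jf f, a * j = 0) → a = 0

/-- The norm of a functional in the dual module (operator norm). -/
noncomputable def dualNorm (f : E → A) : ℝ :=
  sInf {C : ℝ | 0 ≤ C ∧ ∀ x, ‖f x‖ ≤ C * ‖x‖}

end Defs

section DualInner

variable {A : Type*} [CStarAlgebra A] [PartialOrder A] [StarOrderedRing A]
variable {E : Type*} [NormedAddCommGroup E] [NormedSpace ℂ E] [SMul Aᵐᵒᵖ E] [RightCStarModule A E]

/-- `inn` is an extension of the inner product of `M` to the dual module `M'`,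
making `M'` a (complete) Hilbert C*-module; this is the meaning of
"`M` is a Hilbert C*-module with a Hilbert dual".  -/
structure IsDualInner (inn : (E → A) → (E → A) → A) : Prop where
  extends_inner : ∀ m n : E, inn (mhat m) (mhat n) = inner A m n
  eval : ∀ f : E → A, IsDualFunctional f → ∀ m : E, f m = inn (mhat m) f
  add_right : ∀ f g h : E → A, inn f (g + h) = inn f g + inn f h
  act_right : ∀ (f g : E → A) (a : A), inn f (dualAct g a) = inn f g * a
  star_inn : ∀ f g : E → A, star (inn f g) = inn g f
  nonneg : ∀ f : E → A, IsDualFunctional f → 0 ≤ inn f f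
  definite : ∀ f : E → A, IsDualFunctional f → inn f f = 0 → f = 0
  complete : ∀ u : ℕ → E → A, (∀ n, IsDualFunctional (u n)) →
    (∀ ε : ℝ, 0 < ε → ∃ N, ∀ p q, N ≤ p → N ≤ q → ‖inn (u p - u q) (u p - u q)‖ < ε) →
    ∃ g : E → A, IsDualFunctional g ∧
      Filter.Tendsto (fun n => ‖inn (u n - g) (u n - g)‖) Filter.atTop (nhds 0)

end DualInner

section Incl

variable {A : Type*} [CStarAlgebra A] [PartialOrder A] [StarOrderedRing A]
variable {E : Type*} [NormedAddCommGroup E] [NormedSpace ℂ E] [SMul Aᵐᵒᵖ E] [RightCStarModule A E]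
variable {F : Type*} [NormedAddCommGroup F] [NormedSpace ℂ F] [SMul Aᵐᵒᵖ F] [RightCStarModule A F]

/-- `α : M → N` realizes `M` as a Hilbert C*-submodule of `N` (the inner product of `M`
being the restriction of that of `N`). -/
structure IsModuleInclusion (α : E → F) : Prop where
  map_add : ∀ x y, α (x + y) = α x + α y
  map_smulC : ∀ (c : ℂ) (x : E), α (c • x) = c • α x
  map_smulA : ∀ (x : E) (a : A), α (x <• a) = α x <• a
  map_inner : ∀ x y : E, (inner A (α x) (α y) : A) = inner A x y
  injective : Function.Injective α

/-- `M` is a thick submodule of `N`, i.e. `M^⊥ = 0` in `N`. -/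
def IsThick (α : E → F) : Prop := ∀ z : F, (∀ m : E, (inner A (α m) z : A) = 0) → z = 0

/-- The functional `n̂|_M ∈ M'` induced by `n ∈ N`. -/
def restrictFun (α : E → F) (n : F) : E → A := fun m => inner A (α m) n

end Incl

section Aux

variable {A : Type*} [CStarAlgebra A] [PartialOrder A] [StarOrderedRing A]
variable {E : Type*} [NormedAddCommGroup E] [NormedSpace ℂ E] [SMul Aᵐᵒᵖ E] [RightCStarModule A E]
variable {F : Type*} [NormedAddCommGroup F] [NormedSpace ℂ F] [SMul Aᵐᵒᵖ F] [RightCStarModule A F]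

lemma R_inner_add_left {x y z : E} : inner A (x + y) z = inner A x z + inner A y z := by
  rw [← RightCStarModule.star_inner z (x + y), RightCStarModule.inner_add_right, star_add,
    RightCStarModule.star_inner, RightCStarModule.star_inner]

lemma R_inner_op_smul_left {a : A} {x y : E} : inner A (x <• a) y = star a * inner A x y := by
  rw [← RightCStarModule.star_inner y (x <• a), RightCStarModule.inner_op_smul_right, star_mul,
    RightCStarModule.star_inner]

lemma R_inner_smul_left_complex {c : ℂ} {x y : E} :
    inner A (c • x) y = (starRingEnd ℂ) c • inner A x y := by
  rw [← RightCStarModule.star_inner y (c • x), RightCStarModule.inner_smul_right_complex,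
    star_smul, RightCStarModule.star_inner]
  rfl

lemma R_inner_sub_right {x y z : E} : inner A x (y - z) = inner A x y - inner A x z := by
  rw [eq_sub_iff_add_eq, ← RightCStarModule.inner_add_right, sub_add_cancel]

lemma R_inner_sub_left {x y z : E} : inner A (x - y) z = inner A x z - inner A y z := by
  rw [eq_sub_iff_add_eq, ← R_inner_add_left, sub_add_cancel]

lemma R_inner_smul_right_real {r : ℝ} {x y : E} : inner A x (r • y) = r • inner A x y := by
  rw [← Complex.coe_smul, RightCStarModule.inner_smul_right_complex, Complex.coe_smul]

lemma R_inner_smul_left_real {r : ℝ} {x y : E} : inner A (r • x) y = r • inner A x y := by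
  rw [← Complex.coe_smul, R_inner_smul_left_complex, Complex.conj_ofReal, Complex.coe_smul]

lemma R_inner_zero_right {x : E} : inner A x (0 : E) = 0 := by
  have h := RightCStarModule.inner_add_right (x := x) (y := (0 : E)) (z := (0 : E))
  rw [add_zero] at h
  calc inner A x (0 : E) = inner A x 0 + inner A x 0 - inner A x 0 := by rw [add_sub_cancel_right]
    _ = 0 := by rw [← h, sub_self]

lemma R_inner_swap_le (x y : E) : inner A y x * inner A x y ≤ ‖x‖ ^ 2 • inner A y y := by
  rcases eq_or_ne x 0 with h | h
  · simp [h, R_inner_zero_right]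
  · have hx : 0 < ‖x‖ := norm_pos_iff.mpr h
    have hr : ‖x‖ ^ 2 = ‖(inner A x x : A)‖ := by
      rw [RightCStarModule.norm_eq_sqrt_norm_inner_self x, Real.sq_sqrt (norm_nonneg _)]
    set a : A := inner A x y with ha
    have hsa : star a = inner A y x := RightCStarModule.star_inner x y
    have h0 : (0 : A) ≤ inner A (x <• a - ‖x‖ ^ 2 • y) (x <• a - ‖x‖ ^ 2 • y) :=
      RightCStarModule.inner_self_nonneg
    have hexp : inner A (x <• a - ‖x‖ ^ 2 • y) (x <• a - ‖x‖ ^ 2 • y)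
        = star a * inner A x x * a - ‖x‖ ^ 2 • (star a * inner A x y)
          - ‖x‖ ^ 2 • (inner A y x * a) + ‖x‖ ^ 2 • (‖x‖ ^ 2 • inner A y y) := by
      simp only [R_inner_sub_right, R_inner_sub_left, RightCStarModule.inner_op_smul_right,
        R_inner_op_smul_left, R_inner_smul_left_real, R_inner_smul_right_real, smul_sub,
        mul_assoc, mul_smul_comm, smul_mul_assoc, add_mul, sub_mul, mul_add, mul_sub]
      abel
    have hle : star a * inner A x x * a ≤ ‖x‖ ^ 2 • (star a * a) := by
      rw [hr]; exact CStarAlgebra.star_left_conjugate_le_norm_smul (hb := RightCStarModule.star_inner x x)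
    rw [hexp] at h0
    have h1 : (0 : A) ≤ ‖x‖ ^ 2 • (star a * a) - ‖x‖ ^ 2 • (star a * inner A x y)
          - ‖x‖ ^ 2 • (inner A y x * a) + ‖x‖ ^ 2 • (‖x‖ ^ 2 • inner A y y) :=
      h0.trans (by gcongr)
    rw [← ha, hsa, sub_self, zero_sub, le_neg_add_iff_add_le, add_zero] at h1
    rwa [smul_le_smul_iff_of_pos_left (pow_pos hx _)] at h1

lemma R_norm_inner_le (x y : E) : ‖(inner A x y : A)‖ ≤ ‖x‖ * ‖y‖ := by
  have := calc ‖(inner A x y : A)‖ ^ 2 = ‖inner A y x * inner A x y‖ := by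
                rw [← RightCStarModule.star_inner x y, CStarRing.norm_star_mul_self, pow_two]
    _ ≤ ‖‖x‖ ^ 2 • (inner A y y : A)‖ := by
                refine CStarAlgebra.norm_le_norm_of_nonneg_of_le ?_ (R_inner_swap_le x y)
                rw [← RightCStarModule.star_inner x y]
                exact star_mul_self_nonneg _
    _ = ‖x‖ ^ 2 * ‖(inner A y y : A)‖ := by simp [norm_smul]
    _ = ‖x‖ ^ 2 * ‖y‖ ^ 2 := by
                rw [RightCStarModule.norm_eq_sqrt_norm_inner_self y, Real.sq_sqrt (norm_nonneg _)]
    _ = (‖x‖ * ‖y‖) ^ 2 := by rw [mul_pow]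
  exact (pow_le_pow_iff_left₀ (norm_nonneg _) (by positivity) (by simp)).mp this

lemma mhat_isDualFunctional (m : E) : IsDualFunctional (mhat m) := by
  refine ⟨fun x y => R_inner_add_left, fun c x => R_inner_smul_left_complex,
    fun x a => R_inner_op_smul_left, ‖m‖, fun x => ?_⟩
  calc ‖(inner A x m : A)‖ ≤ ‖x‖ * ‖m‖ := R_norm_inner_le x m
    _ = ‖m‖ * ‖x‖ := mul_comm _ _

lemma comp_mhat_isDualFunctional (α : E → F) (hα : IsModuleInclusion α) (n : F) :
    IsDualFunctional ((mhat n) ∘ α) := by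
  refine ⟨fun x y => ?_, fun c x => ?_, fun x a => ?_, ‖n‖, fun x => ?_⟩
  · simp [mhat, hα.map_add, R_inner_add_left]
  · simp [mhat, hα.map_smulC, R_inner_smul_left_complex]
  · simp [mhat, hα.map_smulA, R_inner_op_smul_left]
  · have hx : ‖α x‖ = ‖x‖ := by
      rw [RightCStarModule.norm_eq_sqrt_norm_inner_self (α x),
        RightCStarModule.norm_eq_sqrt_norm_inner_self x, hα.map_inner]
    calc ‖(mhat n ∘ α) x‖ = ‖(inner A (α x) n : A)‖ := rfl
      _ ≤ ‖α x‖ * ‖n‖ := R_norm_inner_le (α x) n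
      _ = ‖n‖ * ‖x‖ := by rw [hx, mul_comm]

end Aux

variable {A : Type*} [CStarAlgebra A] [PartialOrder A] [StarOrderedRing A]
variable {E : Type*} [NormedAddCommGroup E] [NormedSpace ℂ E] [SMul Aᵐᵒᵖ E] [RightCStarModule A E]
variable {F : Type*} [NormedAddCommGroup F] [NormedSpace ℂ F] [SMul Aᵐᵒᵖ F] [RightCStarModule A F]

/-- Let `M ⊆ N` (inclusion `α`), both with Hilbert duals, let `P : N' → M'` be the
restriction map `P g = g ∘ α` and `I = P* : M' → N'` its adjoint.  Then
`I(m̂) = (α m)^` for all `m ∈ M`, and if `M` is thick in `N` then `P ∘ I = id_{M'}`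
and `I` is an isometric inclusion. -/
theorem adjoint_of_restriction (α : E → F) (hα : IsModuleInclusion α)
    (innE : (E → A) → (E → A) → A) (hinnE : IsDualInner innE)
    (innF : (F → A) → (F → A) → A) (hinnF : IsDualInner innF)
    (I : (E → A) → (F → A))
    (hImaps : ∀ f : E → A, IsDualFunctional f → IsDualFunctional (I f))
    (hadj : ∀ (f : E → A) (g : F → A), IsDualFunctional f → IsDualFunctional g →
      innE f (g ∘ α) = innF (I f) g) :
    (∀ m : E, I (mhat m) = mhat (α m)) ∧
    (IsThick α →
      (∀ f : E → A, IsDualFunctional f → (I f) ∘ α = f) ∧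
      (∀ f : E → A, IsDualFunctional f → ‖innF (I f) (I f)‖ = ‖innE f f‖)) := by

  have hcomp_mhat : ∀ m : E, (mhat (α m)) ∘ α = mhat m := by
    intro m; funext x
    simp [mhat, Function.comp, hα.map_inner]
  have key : ∀ f : E → A, IsDualFunctional f → (I f) ∘ α = f := by
    intro f hf
    funext m
    have h1 : (I f) (α m) = innF (mhat (α m)) (I f) :=
      hinnF.eval _ (hImaps f hf) (α m)
    have h2 : innF (I f) (mhat (α m)) = innE f ((mhat (α m)) ∘ α) :=
      (hadj f (mhat (α m)) hf (mhat_isDualFunctional _)).symm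
    have h3 : innE f (mhat m) = star (f m) := by
      rw [hinnE.eval f hf m, hinnE.star_inn]
    calc ((I f) ∘ α) m = (I f) (α m) := rfl
      _ = star (innF (I f) (mhat (α m))) := by rw [h1, hinnF.star_inn]
      _ = star (innE f (mhat m)) := by rw [h2, hcomp_mhat]
      _ = f m := by rw [h3, star_star]
  have keyIso : ∀ f : E → A, IsDualFunctional f → innF (I f) (I f) = innE f f := by
    intro f hf
    have := hadj f (I f) hf (hImaps f hf)
    rw [key f hf] at this
    exact this.symm
  refine ⟨fun m => ?_, fun _ => ⟨key, fun f hf => by rw [keyIso f hf]⟩⟩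
  funext n
  have h1 : (I (mhat m)) n = innF (mhat n) (I (mhat m)) :=
    hinnF.eval _ (hImaps _ (mhat_isDualFunctional m)) n
  have h2 : innF (I (mhat m)) (mhat n) = innE (mhat m) ((mhat n) ∘ α) :=
    (hadj _ _ (mhat_isDualFunctional m) (mhat_isDualFunctional n)).symm
  have h3 : innE (mhat m) ((mhat n) ∘ α) = (mhat n) (α m) :=
    (hinnE.eval _ (comp_mhat_isDualFunctional α hα n) m).symm
  calc (I (mhat m)) n = star (innF (I (mhat m)) (mhat n)) := by rw [h1, hinnF.star_inn]
    _ = star ((inner A (α m) n : A)) := by rw [h2, h3]; rfl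
    _ = mhat (α m) n := RightCStarModule.star_inner _ _
end

section
/- Let X = [0,1] and f = (f_n) be the sequence of Borel functions f_n = 2^{-m(n)} · χ_{[α_{m(n)}^{k(n)}, α_{m(n)}^{k(n)+1})}, where (r_m) enumerates the rationals in (0,1), (α_m^k)_k strictly increases to r_m, and φ(n) = (m(n), k(n)) is a bijection ℕ → ℕ². Then for every nondegenerate closed interval V ⊆ [0,1], the series Σ_n [|f_n|²] fails to be norm convergent in B(V) = Bor(V)/(meager-supported functions). -/
open Filter

/-- In a Baire space, a nonempty open set is not meagre. -/
lemma aux_not_meagre_of_isOpen {X : Type*} [TopologicalSpace X] [BaireSpace X] {U : Set X}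
    (hU : IsOpen U) (hne : U.Nonempty) : ¬ IsMeagre U := by
  intro h
  have hd : Dense Uᶜ := dense_of_mem_residual h
  have hint : interior U = ∅ := interior_eq_empty_iff_dense_compl.2 hd
  rw [hU.interior_eq] at hint
  exact hne.ne_empty hint

/-- The quotient norm of (the class of) a bounded Borel function `ψ` restricted to `V` in
`B(V) = Bor(V)/{functions with meager support}`: the infimum of the levels `t ≥ 0` such
that `|ψ| > t` only on a meager subset of `V`. -/
noncomputable def quotNormOn (V : Set ℝ) (ψ : ℝ → ℝ) : ℝ :=
  sInf {t : ℝ | 0 ≤ t ∧ IsMeagre {x : V | t < |ψ (x : ℝ)|}}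

/-- The functions `f_n = 2^{-m(n)} · χ_{[α_{m(n)}^{k(n)}, α_{m(n)}^{k(n)+1})}` where
`φ(n) = (m(n), k(n))`. -/
noncomputable def paperF (α : ℕ → ℕ → ℝ) (φ : ℕ ≃ ℕ × ℕ) (n : ℕ) : ℝ → ℝ :=
  fun x => (2 : ℝ) ^ (-((φ n).1 : ℤ)) *
    Set.indicator (Set.Ico (α (φ n).1 (φ n).2) (α (φ n).1 ((φ n).2 + 1))) 1 x

/-- Let `(r_m)` enumerate the rationals in `(0,1)`, let `(α_m^k)_k` strictly increase to
`r_m` within `(0,1)`, let `φ : ℕ ≃ ℕ × ℕ`, and let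
`f_n = 2^{-m(n)} · χ_{[α_{m(n)}^{k(n)}, α_{m(n)}^{k(n)+1})}`.  Then for every
nondegenerate closed interval `V ⊆ [0,1]`, the series `Σ_n [|f_n|²]` fails to be norm
convergent in `B(V) = Bor(V)/(meager-supported functions)`, i.e. the partial sums do not
form a Cauchy sequence for the quotient norm. -/
theorem not_normConvergent_on_subinterval
    (r : ℕ → ℝ) (hrinj : Function.Injective r)
    (hrrange : Set.range r = {x : ℝ | x ∈ Set.Ioo (0 : ℝ) 1 ∧ ∃ q : ℚ, (q : ℝ) = x})
    (α : ℕ → ℕ → ℝ)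
    (hαmono : ∀ m, StrictMono (α m))
    (hαmem : ∀ m k, α m k ∈ Set.Ioo (0 : ℝ) 1)
    (hαlim : ∀ m, Tendsto (α m) atTop (nhds (r m)))
    (φ : ℕ ≃ ℕ × ℕ) :
    ∀ c d : ℝ, c < d → Set.Icc c d ⊆ Set.Icc 0 1 →
      ¬ (∀ ε : ℝ, 0 < ε → ∃ N : ℕ, ∀ p q : ℕ, N ≤ p → N ≤ q →
        quotNormOn (Set.Icc c d)
          ((fun x => ∑ n ∈ Finset.range p, paperF α φ n x ^ 2) -
            (fun x => ∑ n ∈ Finset.range q, paperF α φ n x ^ 2)) < ε) := by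
  intro c d hcd hsub hconv
  -- a rational in (c,d)
  have hc0 : (0 : ℝ) ≤ c := (hsub (Set.left_mem_Icc.2 hcd.le)).1
  have hd1 : d ≤ 1 := (hsub (Set.right_mem_Icc.2 hcd.le)).2
  obtain ⟨q, hq1, hq2⟩ := exists_rat_btwn hcd
  have hqr : (q : ℝ) ∈ Set.range r := by
    rw [hrrange]
    exact ⟨⟨lt_of_le_of_lt hc0 hq1, lt_of_lt_of_le hq2 hd1⟩, q, rfl⟩
  obtain ⟨m0, hm0⟩ := hqr
  have hrm0c : c < r m0 := by rw [hm0]; exact hq1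
  have hrm0d : r m0 < d := by rw [hm0]; exact hq2
  -- eventually α m0 k > c
  have hev : ∀ᶠ k in atTop, c < α m0 k := (hαlim m0).eventually (eventually_gt_nhds hrm0c)
  obtain ⟨K, hK⟩ := eventually_atTop.1 hev
  -- all α m0 k ≤ r m0
  have hle_r : ∀ k, α m0 k ≤ r m0 := (hαmono m0).monotone.ge_of_tendsto (hαlim m0)
  -- set ε
  set ε : ℝ := ((2 : ℝ) ^ (-(m0 : ℤ))) ^ 2 with hε
  have hεpos : 0 < ε := by positivity
  obtain ⟨N, hN⟩ := hconv ε hεpos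
  -- choose k ≥ K with φ.symm (m0, k) ≥ N
  have hinj : Function.Injective (fun k : ℕ => φ.symm (m0, k)) := by
    intro a b hab
    have := φ.symm.injective hab
    exact (Prod.ext_iff.1 this).2
  have hfin : {k : ℕ | φ.symm (m0, k) < N}.Finite := by
    have : {k : ℕ | φ.symm (m0, k) < N} ⊆
        (fun k : ℕ => φ.symm (m0, k)) ⁻¹' (Set.Iio N) := fun k hk => hk
    exact (Set.Finite.preimage hinj.injOn (Set.finite_Iio N)).subset this
  obtain ⟨B, hB⟩ := hfin.bddAbove
  set k : ℕ := max K (B + 1) with hk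
  have hkK : K ≤ k := le_max_left _ _
  have hkN : N ≤ φ.symm (m0, k) := by
    by_contra h
    have : k ∈ {k : ℕ | φ.symm (m0, k) < N} := not_le.1 h
    have := hB this
    omega
  set n : ℕ := φ.symm (m0, k) with hn
  have hφn : φ n = (m0, k) := φ.apply_symm_apply _
  -- the interval
  set a : ℝ := α m0 k with ha
  set b : ℝ := α m0 (k + 1) with hb
  have hab : a < b := (hαmono m0) (Nat.lt_succ_self k)
  have hca : c < a := hK k hkK
  have hbd : b < d := lt_of_le_of_lt (hle_r (k + 1)) hrm0d
  have hIco_sub : Set.Ico a b ⊆ Set.Icc c d := fun x hx =>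
    ⟨(hca.le.trans hx.1), (hx.2.le.trans hbd.le)⟩
  -- the difference function
  set ψ : ℝ → ℝ := (fun x => ∑ i ∈ Finset.range (n + 1), paperF α φ i x ^ 2) -
      (fun x => ∑ i ∈ Finset.range n, paperF α φ i x ^ 2) with hψ
  have hψeq : ∀ x : ℝ, ψ x = paperF α φ n x ^ 2 := by
    intro x
    simp only [hψ, Pi.sub_apply, Finset.sum_range_succ]
    ring
  have hpaper : ∀ x : ℝ, paperF α φ n x =
      (2 : ℝ) ^ (-(m0 : ℤ)) * Set.indicator (Set.Ico a b) 1 x := by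
    intro x
    simp [paperF, hφn, ha, hb]
  have hψ_on : ∀ x ∈ Set.Ico a b, ψ x = ε := by
    intro x hx
    rw [hψeq, hpaper, Set.indicator_of_mem hx, hε]
    norm_num
  have hψ_bounds : ∀ x : ℝ, 0 ≤ ψ x ∧ ψ x ≤ 1 := by
    intro x
    rw [hψeq, hpaper]
    constructor
    · positivity
    · by_cases hx : x ∈ Set.Ico a b
      · rw [Set.indicator_of_mem hx]
        simp only [Pi.one_apply, mul_one]
        have h2 : (2 : ℝ) ^ (-(m0 : ℤ)) ≤ 1 :=
          zpow_le_one_of_nonpos₀ (by norm_num) (by simp)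
        have h2' : (0 : ℝ) ≤ (2 : ℝ) ^ (-(m0 : ℤ)) := by positivity
        nlinarith
      · rw [Set.indicator_of_notMem hx]; norm_num
  have hnorm := hN (n + 1) n (hkN.trans (Nat.le_succ n)) hkN
  rw [← hψ] at hnorm
  -- lower bound on the quotient norm
  have hlow : ε ≤ quotNormOn (Set.Icc c d) ψ := by
    apply le_csInf
    · refine ⟨1, by norm_num, ?_⟩
      have : {x : (Set.Icc c d) | (1 : ℝ) < |ψ (x : ℝ)|} = ∅ := by
        ext x
        simp only [Set.mem_setOf_eq, Set.mem_empty_iff_false, iff_false, not_lt]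
        rw [abs_of_nonneg (hψ_bounds x).1]
        exact (hψ_bounds x).2
      rw [this]
      exact IsMeagre.empty
    · rintro t ⟨ht0, htm⟩
      by_contra hlt
      push_neg at hlt
      set U : Set (Set.Icc c d) := (Subtype.val) ⁻¹' (Set.Ioo a b) with hU
      have hUopen : IsOpen U := isOpen_Ioo.preimage continuous_subtype_val
      have hUne : U.Nonempty := by
        have hmid : (a + b) / 2 ∈ Set.Ioo a b := ⟨by linarith, by linarith⟩
        exact ⟨⟨(a + b) / 2, hIco_sub ⟨hmid.1.le, hmid.2⟩⟩, hmid⟩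
      have hUsub : U ⊆ {x : (Set.Icc c d) | t < |ψ (x : ℝ)|} := by
        intro x hx
        have hxI : (x : ℝ) ∈ Set.Ico a b := ⟨hx.1.le, hx.2⟩
        have := hψ_on _ hxI
        simp only [Set.mem_setOf_eq, this, abs_of_nonneg hεpos.le]
        exact hlt
      exact aux_not_meagre_of_isOpen hUopen hUne (htm.mono hUsub)
  exact absurd hnorm (not_lt.2 hlow)
end
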